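/- If every proper subset S of Q of an n-state synchronizing strongly connected automaton is n-Extendable, then the automaton satisfies the Černý conjecture: it has a synchronizing word of length at most (n-1)². -/

import Mathlib

/-- Action of a word on a state of a DFA. -/
def act {Q A : Type*} (δ : Q → A → Q) (q : Q) (w : List A) : Q := w.foldl δ q

/-- Preimage `S·w⁻¹ = {q : q·w ∈ S}` of a subset under a word. -/
def preim {Q A : Type*} [Fintype Q] [DecidableEq Q] (δ : Q → A → Q)
    (S : Finset Q) (w : List A) : Finset Q :=
  Finset.univ.filter fun q => act δ q w ∈ S

lemma act_append {Q A : Type*} (δ : Q → A → Q) (q : Q) (v w : List A) :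
    act δ q (v ++ w) = act δ (act δ q v) w := by simp [act, List.foldl_append]

lemma act_inj {Q A : Type*} (δ : Q → A → Q)
    (h : ∀ a : A, Function.Injective (fun q => δ q a)) (w : List A) :
    Function.Injective (fun q => act δ q w) := by
  induction w with
  | nil => intro x y hxy; exact hxy
  | cons a w ih =>
    intro x y hxy
    exact h a (ih hxy)

lemma ext_step {Q A : Type*} [Fintype Q] [DecidableEq Q] (δ : Q → A → Q)
    (n : ℕ) (hn : Fintype.card Q = n) (p : Q)
    (hext : ∀ S : Finset Q, S.Nonempty → S ≠ Finset.univ →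
      ∃ v : List A, v.length ≤ n ∧ S.card < (preim δ S v).card) :
    ∀ k : ℕ, ∀ S : Finset Q, ∀ w : List A, S.Nonempty →
      (∀ q ∈ S, act δ q w = p) → n ≤ S.card + k →
      ∃ w' : List A, (∀ q : Q, act δ q w' = p) ∧ w'.length ≤ w.length + k * n := by
  intro k
  induction k with
  | zero =>
    intro S w hne hact hcard
    have hSuniv : S = Finset.univ := by
      apply Finset.eq_univ_of_card
      have := Finset.card_le_univ S
      omega
    exact ⟨w, fun q => hact q (hSuniv ▸ Finset.mem_univ q), by omega⟩
  | succ k ih =>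
    intro S w hne hact hcard
    by_cases hSu : S = Finset.univ
    · exact ⟨w, fun q => hact q (hSu ▸ Finset.mem_univ q), by nlinarith [Nat.zero_le ((k+1)*n)]⟩
    · obtain ⟨v, hvlen, hvcard⟩ := hext S hne hSu
      have hne' : (preim δ S v).Nonempty := by
        rw [← Finset.card_pos]; omega
      have hact' : ∀ q ∈ preim δ S v, act δ q (v ++ w) = p := by
        intro q hq
        rw [act_append]
        exact hact _ (Finset.mem_filter.mp hq).2
      obtain ⟨w', hw', hlen⟩ := ih (preim δ S v) (v ++ w) hne' hact' (by omega)
      refine ⟨w', hw', ?_⟩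
      rw [List.length_append] at hlen
      have : (k + 1) * n = k * n + n := by ring
      omega

theorem stmt11 {Q A : Type*} [Fintype Q] [DecidableEq Q] (δ : Q → A → Q)
    (n : ℕ) (hn : Fintype.card Q = n)
    (hsync : ∃ (w : List A) (p : Q), ∀ q : Q, act δ q w = p)
    (hsc : ∀ p q : Q, ∃ u : List A, act δ p u = q)
    (hext : ∀ S : Finset Q, S.Nonempty → S ≠ Finset.univ →
      ∃ v : List A, v.length ≤ n ∧ S.card < (preim δ S v).card) :
    ∃ (w : List A) (p : Q), (∀ q : Q, act δ q w = p) ∧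
      w.length ≤ (n - 1) ^ 2 := by
  obtain ⟨w0, p0, hw0⟩ := hsync
  have hn1 : 1 ≤ n := by
    rw [← hn]
    exact Fintype.card_pos_iff.mpr ⟨p0⟩
  by_cases hn2 : n = 1
  · refine ⟨[], p0, fun q => ?_, by simp⟩
    have : Fintype.card Q ≤ 1 := by omega
    have hsub := Fintype.card_le_one_iff.mp this
    exact hsub q p0
  -- n ≥ 2 : find a non-injective letter
  have hcard2 : 1 < Fintype.card Q := by omega
  have hletter : ∃ (a : A) (p : Q),
      2 ≤ (Finset.univ.filter fun q => δ q a = p).card := by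
    by_contra hc
    push_neg at hc
    have hinj : ∀ a : A, Function.Injective (fun q => δ q a) := by
      intro a x y hxy
      by_contra hxy'
      have hmem : ∀ z ∈ ({x, y} : Finset Q),
          z ∈ Finset.univ.filter fun q => δ q a = δ y a := by
        intro z hz
        simp only [Finset.mem_insert, Finset.mem_singleton] at hz
        rcases hz with rfl | rfl <;> simp [Finset.mem_filter, hxy]
      have := Finset.card_le_card (fun z hz => hmem z hz)
      rw [Finset.card_insert_of_notMem (by simpa using hxy'),
        Finset.card_singleton] at this
      exact absurd (hc a (δ y a)) (by omega)
    obtain ⟨x, y, hxy⟩ := Fintype.exists_pair_of_one_lt_card hcard2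
    exact hxy (act_inj δ hinj w0 (by simp only [hw0 x, hw0 y]))
  obtain ⟨a, p, hp⟩ := hletter
  set S0 : Finset Q := Finset.univ.filter fun q => δ q a = p with hS0
  have hne : S0.Nonempty := by rw [← Finset.card_pos]; omega
  have hact0 : ∀ q ∈ S0, act δ q [a] = p := by
    intro q hq
    exact (Finset.mem_filter.mp hq).2
  obtain ⟨w, hw, hlen⟩ := ext_step δ n hn p hext (n - 2) S0 [a] hne hact0 (by omega)
  refine ⟨w, p, hw, ?_⟩
  obtain ⟨m, rfl⟩ : ∃ m, n = m + 2 := ⟨n - 2, by omega⟩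
  simp only [List.length_singleton] at hlen
  have h1 : m + 2 - 2 = m := by omega
  have h2 : (m + 2 - 1) ^ 2 = 1 + m * (m + 2) := by
    have : m + 2 - 1 = m + 1 := by omega
    rw [this]; ring
  rw [h1] at hlen
  omega
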